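/- arXiv:1505.01298 — 4 statements merged into one kernel-verified Lean document; each statement's English description precedes it below -/
import Mathlib

section
/- There exists a constant C > 0 such that for every integer N ≥ 1 the following holds: for any probability space carrying ℝ²-valued random variables X and Y such that ‖X‖ = √e almost surely and ‖Y‖² has the same law as S_N, one has E[‖X − Y‖²] ≥ C/N. (This is the paper's conclusion that the Wasserstein-2 distance between the law of the solution at time 1 of the SDE dx₁ = x₂∘dW, dx₂ = −x₁∘dW started at (1,0) — whose norm equals √e almost surely — and the law of its Euler approximation with step size h = 1/N is at least C√h, no matter what coupling is used.) -/
open MeasureTheory ProbabilityTheory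

namespace EulerSchemeAux

open Real

noncomputable def gam : Measure ℝ := gaussianReal 0 1

instance : IsProbabilityMeasure gam := by unfold gam; infer_instance

lemma integrable_sq_gauss : Integrable (fun x : ℝ => x ^ 2) gam := by
  rw [gam, gaussianReal_of_var_ne_zero 0 one_ne_zero,
    integrable_withDensity_iff (measurable_gaussianPDF 0 1)
      (Filter.Eventually.of_forall fun x => ENNReal.ofReal_lt_top)]
  have h : Integrable (fun x : ℝ =>
      (Real.sqrt (2 * π * 1))⁻¹ * (x ^ (2:ℝ) * Real.exp (-(1/2) * x ^ 2))) volume :=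
    (integrable_rpow_mul_exp_neg_mul_sq (by norm_num) (by norm_num : (-1:ℝ) < 2)).const_mul _
  refine h.congr (Filter.Eventually.of_forall fun x => ?_)
  simp only [gaussianPDF, gaussianPDFReal]
  rw [ENNReal.toReal_ofReal (by positivity)]
  rw [show x ^ (2:ℝ) = x ^ (2:ℕ) from Real.rpow_natCast x 2]
  push_cast
  ring_nf

lemma num_bound : (1:ℝ)/20 ≤ (Real.sqrt (2 * π * 1))⁻¹ * Real.exp (-2) := by
  have hsπ : Real.sqrt (2 * π * 1) ≤ 2.6 := by
    have h : 2 * π * 1 ≤ 6.3 := by nlinarith [Real.pi_lt_d2]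
    nlinarith [Real.sq_sqrt (by positivity : (0:ℝ) ≤ 2 * π * 1),
      Real.sqrt_nonneg (2 * π * 1)]
  have hs0 : 0 < Real.sqrt (2 * π * 1) := Real.sqrt_pos.mpr (by positivity)
  have he : Real.exp 2 ≤ 7.39 := by
    have h1 := Real.exp_one_lt_d9
    have h2 : Real.exp 2 = Real.exp 1 * Real.exp 1 := by
      rw [← Real.exp_add]; norm_num
    nlinarith [Real.exp_pos 1]
  have he0 : 0 < Real.exp 2 := Real.exp_pos 2
  rw [Real.exp_neg, ← mul_inv, one_div]
  exact inv_anti₀ (by positivity) (by nlinarith)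

lemma gauss_prob {a b : ℝ} (h1 : b = a + 1) (h2 : -2 ≤ a) (h3 : b ≤ 2) :
    1/20 ≤ (gam (Set.Icc a b)).toReal := by
  rw [gam, gaussianReal_apply_eq_integral 0 one_ne_zero,
    ENNReal.toReal_ofReal (setIntegral_nonneg measurableSet_Icc
      fun x _ => gaussianPDFReal_nonneg _ _ _)]
  have key : ∀ x ∈ Set.Icc a b, (1:ℝ)/20 ≤ gaussianPDFReal 0 1 x := by
    intro x hx
    have hx2 : x ^ 2 ≤ 4 := by rcases hx with ⟨hl, hr⟩; nlinarith
    rw [gaussianPDFReal]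
    push_cast
    refine le_trans num_bound ?_
    gcongr
    nlinarith
  calc (1:ℝ)/20 = ((volume (Set.Icc a b)).toReal) * (1/20) := by
        rw [Real.volume_Icc, h1]; norm_num
  _ = ∫ _ in Set.Icc a b, (1:ℝ)/20 := by rw [setIntegral_const]; simp [smul_eq_mul, ENNReal.toReal_ofReal']
  _ ≤ ∫ x in Set.Icc a b, gaussianPDFReal 0 1 x := by
      apply setIntegral_mono_on
      · exact integrableOn_const (by rw [Real.volume_Icc]; exact ENNReal.ofReal_lt_top.ne)
      · exact (integrable_gaussianPDFReal 0 1).integrableOn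
      · exact measurableSet_Icc
      · exact key

lemma delta_lb {N : ℝ} (hN : 1 ≤ N) :
    1/(4*N) ≤ Real.sqrt (1 + 1/N) - Real.sqrt (1 + 1/(4*N)) := by
  have hN0 : 0 < N := by linarith
  set a := 1 + 1/N with ha
  set b := 1 + 1/(4*N) with hb
  have ha0 : (0:ℝ) ≤ a := by positivity
  have hb0 : (0:ℝ) ≤ b := by positivity
  have ha2 : a ≤ 2 := by rw [ha]; have : 1/N ≤ 1 := by rw [div_le_one hN0]; linarith
                         linarith
  have hsa2 : Real.sqrt a ≤ 3/2 := by
    nlinarith [Real.sq_sqrt ha0, Real.sqrt_nonneg a]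
  have hsb2 : Real.sqrt b ≤ 3/2 := by
    have : b ≤ a := by rw [ha, hb]; gcongr; linarith
    nlinarith [Real.sq_sqrt hb0, Real.sqrt_nonneg b, Real.sqrt_le_sqrt this]
  have key : (Real.sqrt a - Real.sqrt b) * (Real.sqrt a + Real.sqrt b) = 3/(4*N) := by
    have h1 := Real.sq_sqrt ha0
    have h2 := Real.sq_sqrt hb0
    have h3 : a - b = 3/(4*N) := by rw [ha, hb]; field_simp; ring
    linear_combination h1 - h2 + h3
  have hpos : 0 ≤ Real.sqrt a - Real.sqrt b :=
    sub_nonneg.mpr (Real.sqrt_le_sqrt (by rw [ha, hb]; gcongr; linarith))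
  have husum : Real.sqrt a + Real.sqrt b ≤ 3 := by linarith
  have h3t : (Real.sqrt a - Real.sqrt b) * (Real.sqrt a + Real.sqrt b)
      ≤ (Real.sqrt a - Real.sqrt b) * 3 :=
    mul_le_mul_of_nonneg_left husum hpos
  have hr : 3/(4*N) = 3 * (1/(4*N)) := by ring
  linarith

lemma int_psi {N : ℝ} (hN0 : 0 < N) : Integrable (fun x : ℝ => 1 + x^2/N) gam :=
  (integrable_const 1).add (integrable_sq_gauss.div_const N)

lemma int_phi {N : ℝ} (hN0 : 0 < N) :
    Integrable (fun x : ℝ => Real.sqrt (1 + x^2/N)) gam := by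
  refine (int_psi hN0).mono'
    ((by continuity : Continuous fun x : ℝ => 1 + x^2/N).sqrt).aestronglyMeasurable
    (Filter.Eventually.of_forall fun x => ?_)
  rw [Real.norm_eq_abs, abs_of_nonneg (Real.sqrt_nonneg _)]
  exact (Real.sqrt_le_left (by positivity)).mpr
    (by nlinarith [div_nonneg (sq_nonneg x) hN0.le])

lemma one_le_r {N : ℝ} (hN0 : 0 < N) :
    1 ≤ ∫ x, Real.sqrt (1 + x^2/N) ∂gam := by
  have h := integral_mono (μ := gam) (integrable_const 1) (int_phi hN0) (fun x =>
    Real.one_le_sqrt.mpr (by nlinarith [div_nonneg (sq_nonneg x) hN0.le]))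
  simpa using h

lemma var_lb {N : ℝ} (hN : 1 ≤ N) :
    1/(1280 * N^2) ≤ (∫ x, (1 + x^2/N) ∂gam) - (∫ x, Real.sqrt (1 + x^2/N) ∂gam)^2 := by
  have hN0 : 0 < N := by linarith
  set φ : ℝ → ℝ := fun x => Real.sqrt (1 + x^2/N) with hφ
  set ψ : ℝ → ℝ := fun x => 1 + x^2/N with hψ
  have hψpos : ∀ x, (0:ℝ) ≤ 1 + x^2/N := fun x => by positivity
  have hIψ : Integrable ψ gam := int_psi hN0
  have hIφ : Integrable φ gam := int_phi hN0
  set m := ∫ x, φ x ∂gam with hm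
  have hIvar : Integrable (fun x => (φ x - m)^2) gam := by
    have : (fun x => (φ x - m)^2) = fun x => (ψ x - 2*m*(φ x)) + m^2 := by
      funext x
      have := Real.sq_sqrt (hψpos x)
      simp only [hφ, hψ] at *
      nlinarith [this]
    rw [this]
    exact (hIψ.sub ((hIφ.const_mul (2*m)))).add (integrable_const _)
  have hvar : ∫ x, (φ x - m)^2 ∂gam = (∫ x, ψ x ∂gam) - m^2 := by
    have heq : (fun x => (φ x - m)^2) = fun x => (ψ x - 2*m*(φ x)) + m^2 := by
      funext x
      have := Real.sq_sqrt (hψpos x)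
      simp only [hφ, hψ] at *
      nlinarith [this]
    have hsub : Integrable (fun x => ψ x - 2*m*(φ x)) gam := hIψ.sub (hIφ.const_mul (2*m))
    rw [heq, integral_add hsub (integrable_const _),
      integral_sub hIψ (hIφ.const_mul (2*m)), integral_const_mul, integral_const]
    simp only [measure_univ, probReal_univ, ENNReal.toReal_one, smul_eq_mul, one_mul, ← hm]
    ring
  rw [← hvar]
  set ua := Real.sqrt (1 + 1/N) with hua
  set ub := Real.sqrt (1 + 1/(4*N)) with hub
  have hδ : 1/(4*N) ≤ ua - ub := delta_lb hN
  have hbound : ∀ (s : Set ℝ), MeasurableSet s → (∀ x ∈ s, 1/(8*N) ≤ |φ x - m|) →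
      1/20 ≤ (gam s).toReal → 1/(1280 * N^2) ≤ ∫ x, (φ x - m)^2 ∂gam := by
    intro s hs hsep hps
    have h1 : ∫ x in s, (1/(8*N))^2 ∂gam ≤ ∫ x in s, (φ x - m)^2 ∂gam := by
      apply setIntegral_mono_on
      · exact integrableOn_const (measure_ne_top _ _)
      · exact hIvar.integrableOn
      · exact hs
      · intro x hx
        have := hsep x hx
        calc (1/(8*N))^2 ≤ |φ x - m|^2 := by gcongr
        _ = (φ x - m)^2 := sq_abs _
    have h2 : ∫ x in s, (φ x - m)^2 ∂gam ≤ ∫ x, (φ x - m)^2 ∂gam :=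
      setIntegral_le_integral hIvar (Filter.Eventually.of_forall fun x => sq_nonneg _)
    have h3 : ∫ x in s, (1/(8*N))^2 ∂gam = (gam s).toReal * (1/(8*N))^2 := by
      rw [setIntegral_const]; simp [smul_eq_mul, measureReal_def]
    have h4 : 1/(1280*N^2) ≤ (gam s).toReal * (1/(8*N))^2 := by
      have : (1:ℝ)/20 * (1/(8*N))^2 ≤ (gam s).toReal * (1/(8*N))^2 := by gcongr
      calc 1/(1280*N^2) = (1:ℝ)/20 * (1/(8*N))^2 := by field_simp; ring
      _ ≤ _ := this
    linarith
  rcases le_or_gt m ((ua + ub)/2) with hcase | hcase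
  · refine hbound (Set.Icc 1 2) measurableSet_Icc (fun x hx => ?_) ?_
    · have hx1 : 1 ≤ x^2 := by rcases hx with ⟨hl, hr⟩; nlinarith
      have hφx : ua ≤ φ x := by
        rw [hua, hφ]
        apply Real.sqrt_le_sqrt
        have : 1/N ≤ x^2/N := by gcongr
        linarith
      have hthis : 1/(8*N) ≤ φ x - m := by
        have h8 : 1/(8*N) = (1/(4*N))/2 := by ring
        rw [h8]; linarith
      exact le_abs.mpr (Or.inl hthis)
    · exact gauss_prob (by norm_num) (by norm_num) (by norm_num)
  · refine hbound (Set.Icc (-1/2) (1/2)) measurableSet_Icc (fun x hx => ?_) ?_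
    · have hx1 : x^2 ≤ 1/4 := by rcases hx with ⟨hl, hr⟩; nlinarith
      have hφx : φ x ≤ ub := by
        rw [hub, hφ]
        apply Real.sqrt_le_sqrt
        have h1 : x^2/N ≤ (1/4)/N := by gcongr
        have h2 : ((1:ℝ)/4)/N = 1/(4*N) := by ring
        linarith
      have hneg : 1/(8*N) ≤ m - φ x := by
        have h8 : 1/(8*N) = (1/(4*N))/2 := by ring
        rw [h8]; linarith
      exact le_abs.mpr (Or.inr (by linarith))
    · exact gauss_prob (by norm_num) (by norm_num) (by norm_num)

lemma indep_prod_integral {Ω : Type*} [MeasureSpace Ω] [IsProbabilityMeasure (ℙ : Measure Ω)]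
    {W : ℕ → Ω → ℝ}
    (hi : iIndepFun W ℙ) (hm : ∀ j, Measurable (W j))
    (hint : ∀ j, Integrable (W j) ℙ) (s : Finset ℕ) :
    Integrable (∏ j ∈ s, W j) ℙ ∧ ∫ ω, (∏ j ∈ s, W j) ω ∂ℙ = ∏ j ∈ s, ∫ ω, W j ω ∂ℙ := by
  induction s using Finset.induction with
  | empty => exact ⟨(integrable_const 1).congr (Filter.Eventually.of_forall fun ω => rfl), by simp⟩
  | @insert i s his ih =>
    have hindep : IndepFun (∏ j ∈ s, W j) (W i) ℙ :=
      hi.indepFun_finsetProd_of_notMem hm his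
    have hInt : Integrable ((∏ j ∈ s, W j) * W i) ℙ :=
      hindep.integrable_mul ih.1 (hint i)
    have hmul : (∏ j ∈ insert i s, W j) = (∏ j ∈ s, W j) * W i := by
      rw [Finset.prod_insert his]; ring
    constructor
    · rw [hmul]; exact hInt
    · rw [hmul, hindep.integral_mul_eq_mul_integral ih.1.aestronglyMeasurable (hint i).aestronglyMeasurable,
        Finset.prod_insert his, ih.2]
      ring

lemma pow_sub_pow_ge {x y : ℝ} (hy : 1 ≤ y) (hxy : y ≤ x) (n : ℕ) :
    (n:ℝ) * (x - y) ≤ x^n - y^n := by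
  induction n with
  | zero => simp
  | succ k ih =>
    have hx : 1 ≤ x := hy.trans hxy
    have hyk : (1:ℝ) ≤ y^k := one_le_pow₀ hy
    have hxk : y^k ≤ x^k := pow_le_pow_left₀ (by linarith) hxy k
    have hstep : x^(k+1) - y^(k+1) = x*(x^k - y^k) + (x-y)*y^k := by
      rw [pow_succ, pow_succ]; ring
    push_cast
    nlinarith [ih, hyk, hxk]

lemma sqrt_finset_prod (s : Finset ℕ) (f : ℕ → ℝ) (h : ∀ j, 0 ≤ f j) :
    Real.sqrt (∏ j ∈ s, f j) = ∏ j ∈ s, Real.sqrt (f j) := by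
  induction s using Finset.induction with
  | empty => simp
  | @insert i s his ih => rw [Finset.prod_insert his, Finset.prod_insert his,
      Real.sqrt_mul (h _), ih]

end EulerSchemeAux
section Main

open EulerSchemeAux

set_option maxHeartbeats 1600000 in
/-- There exists a constant `C > 0` such that for every `N ≥ 1` and any
probability space carrying `ℝ²`-valued random variables `X` and `Y` with `‖X‖ = √e` a.s.
and `‖Y‖²` distributed as `S_N = ∏_{j=1}^N (1 + Z_j²/N)`, one has `E[‖X − Y‖²] ≥ C/N`.
This expresses that the Wasserstein-2 distance between the law of the SDE solution at
time 1 and its Euler approximation with step size `h = 1/N` is at least `C √h`. -/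
theorem euler_scheme_wasserstein_lower_bound
    {Ω : Type*} [MeasureSpace Ω] [IsProbabilityMeasure (ℙ : Measure Ω)]
    (Z : ℕ → Ω → ℝ) (hmeas : ∀ j, Measurable (Z j))
    (hindep : iIndepFun Z ℙ)
    (hdist : ∀ j, Measure.map (Z j) ℙ = gaussianReal 0 1) :
    ∃ C > (0 : ℝ), ∀ N : ℕ, 1 ≤ N →
      ∀ (Ω' : Type) (_ : MeasureSpace Ω') (_ : IsProbabilityMeasure (ℙ : Measure Ω'))
        (X Y : Ω' → EuclideanSpace ℝ (Fin 2)),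
        Measurable X → Measurable Y →
        (∀ᵐ ω' ∂(ℙ : Measure Ω'), ‖X ω'‖ = Real.sqrt (Real.exp 1)) →
        Measure.map (fun ω' => ‖Y ω'‖ ^ 2) (ℙ : Measure Ω') =
          Measure.map (fun ω => ∏ j ∈ Finset.Icc 1 N, (1 + (Z j ω) ^ 2 / N)) ℙ →
        C / N ≤ ∫ ω', ‖X ω' - Y ω'‖ ^ 2 ∂(ℙ : Measure Ω') := by
  refine ⟨1/1280, by norm_num, ?_⟩
  intro N hN Ω' _ hP' X Y hXm hYm hXnorm hlaw
  haveI := hP'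
  have hNr : (1:ℝ) ≤ (N:ℝ) := by exact_mod_cast hN
  have hN0 : (0:ℝ) < (N:ℝ) := by linarith
  -- notation
  set F1 : ℝ → ℝ := fun x => 1 + x^2/(N:ℝ) with hF1
  set F2 : ℝ → ℝ := fun x => Real.sqrt (1 + x^2/(N:ℝ)) with hF2
  have hF1c : Continuous F1 := by rw [hF1]; continuity
  have hF2c : Continuous F2 := by rw [hF2]; exact (by continuity :
    Continuous fun x : ℝ => 1 + x^2/(N:ℝ)).sqrt
  set c1 : ℝ := ∫ x, F1 x ∂gam with hc1
  set r : ℝ := ∫ x, F2 x ∂gam with hrdef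
  have hr1 : 1 ≤ r := one_le_r hN0
  have hvarlb : 1/(1280 * (N:ℝ)^2) ≤ c1 - r^2 := var_lb hNr
  -- independence and integrability on Ω
  have hiF1 : iIndepFun (fun j => F1 ∘ Z j) ℙ :=
    hindep.comp _ (fun _ => hF1c.measurable)
  have hiF2 : iIndepFun (fun j => F2 ∘ Z j) ℙ :=
    hindep.comp _ (fun _ => hF2c.measurable)
  have hintF1 : ∀ j, Integrable (F1 ∘ Z j) ℙ := fun j => by
    refine (integrable_map_measure hF1c.aestronglyMeasurable (hmeas j).aemeasurable).mp ?_
    rw [hdist j]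
    exact int_psi hN0
  have hintF2 : ∀ j, Integrable (F2 ∘ Z j) ℙ := fun j => by
    refine (integrable_map_measure hF2c.aestronglyMeasurable (hmeas j).aemeasurable).mp ?_
    rw [hdist j]
    exact int_phi hN0
  have hgj1 : ∀ j, ∫ ω, (F1 ∘ Z j) ω ∂ℙ = c1 := fun j => by
    rw [hc1]
    calc ∫ ω, (F1 ∘ Z j) ω ∂ℙ = ∫ x, F1 x ∂(Measure.map (Z j) ℙ) :=
          (integral_map (hmeas j).aemeasurable hF1c.aestronglyMeasurable).symm
    _ = ∫ x, F1 x ∂gam := by rw [hdist j]; rfl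
  have hgj2 : ∀ j, ∫ ω, (F2 ∘ Z j) ω ∂ℙ = r := fun j => by
    rw [hrdef]
    calc ∫ ω, (F2 ∘ Z j) ω ∂ℙ = ∫ x, F2 x ∂(Measure.map (Z j) ℙ) :=
          (integral_map (hmeas j).aemeasurable hF2c.aestronglyMeasurable).symm
    _ = ∫ x, F2 x ∂gam := by rw [hdist j]; rfl
  have hcard : (Finset.Icc 1 N).card = N := by rw [Nat.card_Icc]; omega
  have hP1 := indep_prod_integral hiF1 (fun j => hF1c.measurable.comp (hmeas j))
    hintF1 (Finset.Icc 1 N)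
  have hP2 := indep_prod_integral hiF2 (fun j => hF2c.measurable.comp (hmeas j))
    hintF2 (Finset.Icc 1 N)
  set Sfun : Ω → ℝ := fun ω => ∏ j ∈ Finset.Icc 1 N, (1 + (Z j ω) ^ 2 / N) with hSfun
  have hSeq : Sfun = (∏ j ∈ Finset.Icc 1 N, (F1 ∘ Z j)) := by
    funext ω
    show (∏ j ∈ Finset.Icc 1 N, (1 + (Z j ω)^2/(N:ℝ)))
      = (∏ j ∈ Finset.Icc 1 N, (F1 ∘ Z j)) ω
    rw [Finset.prod_apply]
    exact Finset.prod_congr rfl (fun j _ => rfl)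
  have hSm : Measurable Sfun := Finset.measurable_prod _
    (fun j _ => measurable_const.add (((hmeas j).pow_const 2).div_const _))
  have hIS : Integrable Sfun ℙ := by rw [hSeq]; exact hP1.1
  have hES : ∫ ω, Sfun ω ∂ℙ = c1 ^ N := by
    rw [hSeq, hP1.2, Finset.prod_congr rfl (fun j _ => hgj1 j), Finset.prod_const, hcard]
  have hsqrtS : (fun ω => Real.sqrt (Sfun ω)) = (∏ j ∈ Finset.Icc 1 N, (F2 ∘ Z j)) := by
    funext ω
    show Real.sqrt (∏ j ∈ Finset.Icc 1 N, (1 + (Z j ω)^2/(N:ℝ)))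
      = (∏ j ∈ Finset.Icc 1 N, (F2 ∘ Z j)) ω
    rw [Finset.prod_apply]
    exact (sqrt_finset_prod _ (fun j => 1 + (Z j ω)^2/(N:ℝ)) (fun j => by positivity)).trans
      (Finset.prod_congr rfl (fun j _ => rfl))
  have hESqrt : ∫ ω, Real.sqrt (Sfun ω) ∂ℙ = r ^ N := by
    rw [hsqrtS, hP2.2, Finset.prod_congr rfl (fun j _ => hgj2 j), Finset.prod_const, hcard]
  -- transfer to Ω'
  have hb2m : Measurable (fun ω' => ‖Y ω'‖^2) := hYm.norm.pow_const 2
  have hIb2 : Integrable (fun ω' => ‖Y ω'‖^2) (ℙ : Measure Ω') := by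
    have h1 : Integrable (id : ℝ → ℝ) (Measure.map Sfun ℙ) :=
      (integrable_map_measure aestronglyMeasurable_id hSm.aemeasurable).mpr hIS
    rw [← hlaw] at h1
    exact (integrable_map_measure aestronglyMeasurable_id hb2m.aemeasurable).mp h1
  have hEb2 : ∫ ω', ‖Y ω'‖^2 ∂(ℙ : Measure Ω') = c1 ^ N := by
    calc ∫ ω', ‖Y ω'‖^2 ∂(ℙ : Measure Ω')
        = ∫ x, id x ∂(Measure.map (fun ω' => ‖Y ω'‖^2) ℙ) :=
          (integral_map hb2m.aemeasurable aestronglyMeasurable_id).symm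
    _ = ∫ x, id x ∂(Measure.map Sfun ℙ) := by rw [hlaw]
    _ = ∫ ω, Sfun ω ∂ℙ := integral_map hSm.aemeasurable aestronglyMeasurable_id
    _ = c1 ^ N := hES
  have hEb : ∫ ω', ‖Y ω'‖ ∂(ℙ : Measure Ω') = r ^ N := by
    calc ∫ ω', ‖Y ω'‖ ∂(ℙ : Measure Ω')
        = ∫ ω', Real.sqrt (‖Y ω'‖^2) ∂(ℙ : Measure Ω') := by
          refine integral_congr_ae (Filter.Eventually.of_forall fun ω' => ?_)
          exact (Real.sqrt_sq (norm_nonneg _)).symm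
    _ = ∫ x, Real.sqrt x ∂(Measure.map (fun ω' => ‖Y ω'‖^2) ℙ) :=
          (integral_map hb2m.aemeasurable Real.continuous_sqrt.aestronglyMeasurable).symm
    _ = ∫ x, Real.sqrt x ∂(Measure.map Sfun ℙ) := by rw [hlaw]
    _ = ∫ ω, Real.sqrt (Sfun ω) ∂ℙ :=
          integral_map hSm.aemeasurable Real.continuous_sqrt.aestronglyMeasurable
    _ = r ^ N := hESqrt
  have hIb : Integrable (fun ω' => ‖Y ω'‖) (ℙ : Measure Ω') := by
    refine ((integrable_const (1:ℝ)).add hIb2).mono' hYm.norm.aestronglyMeasurable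
      (Filter.Eventually.of_forall fun ω' => ?_)
    rw [Real.norm_eq_abs, abs_of_nonneg (norm_nonneg _)]
    simp only [Pi.add_apply]
    nlinarith [norm_nonneg (Y ω'), sq_nonneg (‖Y ω'‖ - 1)]
  set se : ℝ := Real.sqrt (Real.exp 1) with hse
  have hse2 : se^2 = Real.exp 1 := Real.sq_sqrt (Real.exp_pos 1).le
  have hse0 : 0 ≤ se := Real.sqrt_nonneg _
  -- integrability of the target and lower bound function
  have hImain : Integrable (fun ω' => ‖X ω' - Y ω'‖^2) (ℙ : Measure Ω') := by
    refine ((integrable_const (2 * Real.exp 1)).add (hIb2.const_mul 2)).mono'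
      ((hXm.sub hYm).norm.pow_const 2).aestronglyMeasurable ?_
    filter_upwards [hXnorm] with ω' hω'
    rw [Real.norm_eq_abs, abs_of_nonneg (sq_nonneg _)]
    simp only [Pi.add_apply]
    have h1 : ‖X ω' - Y ω'‖ ≤ ‖X ω'‖ + ‖Y ω'‖ := norm_sub_le _ _
    have h2 : 0 ≤ ‖X ω' - Y ω'‖ := norm_nonneg _
    rw [hω'] at h1
    nlinarith [norm_nonneg (Y ω'), hse2, hse0, sq_nonneg (se - ‖Y ω'‖)]
  have hIlow : Integrable (fun ω' => (se - ‖Y ω'‖)^2) (ℙ : Measure Ω') := by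
    have heq : (fun ω' => (se - ‖Y ω'‖)^2)
        = fun ω' => (Real.exp 1 - (2*se)*‖Y ω'‖) + ‖Y ω'‖^2 := by
      funext ω'; nlinarith [hse2]
    rw [heq]
    exact ((integrable_const _).sub (hIb.const_mul (2*se))).add hIb2
  have hmono : ∫ ω', (se - ‖Y ω'‖)^2 ∂(ℙ : Measure Ω')
      ≤ ∫ ω', ‖X ω' - Y ω'‖^2 ∂(ℙ : Measure Ω') := by
    refine integral_mono_ae hIlow hImain ?_
    filter_upwards [hXnorm] with ω' hω'
    have h1 : |‖X ω'‖ - ‖Y ω'‖| ≤ ‖X ω' - Y ω'‖ := abs_norm_sub_norm_le _ _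
    rw [hω'] at h1
    nlinarith [abs_nonneg (se - ‖Y ω'‖), sq_abs (se - ‖Y ω'‖), norm_nonneg (X ω' - Y ω')]
  have hexpand : ∫ ω', (se - ‖Y ω'‖)^2 ∂(ℙ : Measure Ω')
      = Real.exp 1 - 2*se*(r^N) + c1^N := by
    have heq : (fun ω' => (se - ‖Y ω'‖)^2)
        = fun ω' => (Real.exp 1 - (2*se)*‖Y ω'‖) + ‖Y ω'‖^2 := by
      funext ω'; nlinarith [hse2]
    have hsub' : Integrable (fun ω' => Real.exp 1 - 2*se*‖Y ω'‖) (ℙ : Measure Ω') :=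
      (integrable_const _).sub (hIb.const_mul (2*se))
    rw [heq, integral_add hsub' hIb2,
      integral_sub (integrable_const _) (hIb.const_mul (2*se)), integral_const_mul,
      integral_const, hEb, hEb2]
    simp only [measure_univ, probReal_univ, ENNReal.toReal_one, smul_eq_mul, one_mul]
  -- final arithmetic
  have hr2c1 : r^2 ≤ c1 := by
    have hp : 0 < 1/(1280*(N:ℝ)^2) := by positivity
    linarith
  have h1r2 : (1:ℝ) ≤ r^2 := by nlinarith
  have hkey : (N:ℝ) * (c1 - r^2) ≤ c1^N - (r^2)^N := pow_sub_pow_ge h1r2 hr2c1 N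
  have hsq : (r^2)^N = (r^N)^2 := by rw [← pow_mul, ← pow_mul, Nat.mul_comm]
  have hfinal : (1/1280)/(N:ℝ) ≤ Real.exp 1 - 2*se*(r^N) + c1^N := by
    have e1 : (1/1280)/(N:ℝ) = (N:ℝ) * (1/(1280 * (N:ℝ)^2)) := by
      field_simp
    have e2 : (N:ℝ) * (1/(1280 * (N:ℝ)^2)) ≤ (N:ℝ) * (c1 - r^2) :=
      mul_le_mul_of_nonneg_left hvarlb hN0.le
    have e3 : Real.exp 1 - 2*se*(r^N) + c1^N
        = (se - r^N)^2 + (c1^N - (r^N)^2) := by nlinarith [hse2]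
    have e4 : 0 ≤ (se - r^N)^2 := sq_nonneg _
    rw [e1, e3]
    rw [hsq] at hkey
    linarith
  calc (1/1280 : ℝ)/(N:ℝ) ≤ Real.exp 1 - 2*se*(r^N) + c1^N := hfinal
  _ = ∫ ω', (se - ‖Y ω'‖)^2 ∂(ℙ : Measure Ω') := hexpand.symm
  _ ≤ _ := hmono

end Main
end

section
/- For every integer N ≥ 1, E|1 − ∑_{j=1}^N log(1 + Z_j²/N)| ≥ E|1 − (1/N)∑_{j=1}^N Z_j²| − 3/(2N). (This is the comparison step in the proof of (e-uc), obtained from the pointwise estimate 0 ≤ x − log(1+x) ≤ x²/2 for x ≥ 0 together with E[Z_j⁴] = 3.) -/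
open MeasureTheory ProbabilityTheory

section Aux
open Real
open scoped NNReal ENNReal

lemma my_log_one_add_ge {t : ℝ} (ht : 0 ≤ t) : t - t ^ 2 / 2 ≤ Real.log (1 + t) := by
  have key : MonotoneOn (fun x : ℝ => Real.log (1 + x) - (x - x ^ 2 / 2)) (Set.Ici 0) := by
    have hderiv : ∀ x : ℝ, 0 < x →
        HasDerivAt (fun y : ℝ => Real.log (1 + y) - (y - y ^ 2 / 2)) ((1 + x)⁻¹ - (1 - x)) x := by
      intro x hx
      have h1 : (0:ℝ) < 1 + x := by linarith [hx]
      have hlog : HasDerivAt (fun y : ℝ => Real.log (1 + y)) (1 + x)⁻¹ x := by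
        have := (Real.hasDerivAt_log h1.ne').comp x ((hasDerivAt_id x).const_add 1)
        exact this.congr_deriv (by simp)
      have hpoly : HasDerivAt (fun y : ℝ => y - y ^ 2 / 2) (1 - x) x := by
        have := (hasDerivAt_id x).sub ((hasDerivAt_pow 2 x).div_const 2)
        exact this.congr_deriv (by norm_num)
      exact hlog.sub hpoly
    apply monotoneOn_of_deriv_nonneg (convex_Ici 0)
    · apply ContinuousOn.sub
      · apply Real.continuousOn_log.comp (Continuous.continuousOn (by continuity))
        intro x hx
        simp only [Set.mem_Ici] at hx
        simp only [Set.mem_compl_iff, Set.mem_singleton_iff]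
        intro h; nlinarith
      · fun_prop
    · intro x hx
      rw [interior_Ici] at hx
      exact ((hderiv x hx).differentiableAt).differentiableWithinAt
    · intro x hx
      rw [interior_Ici] at hx
      rw [(hderiv x hx).deriv]
      have h1 : (0:ℝ) < 1 + x := by linarith [Set.mem_Ioi.mp hx]
      have h2 : (0:ℝ) ≤ x ^ 2 / (1 + x) := div_nonneg (sq_nonneg x) h1.le
      have h3 : x ^ 2 / (1 + x) = (1 + x)⁻¹ - (1 - x) := by field_simp [h1.ne']; ring
      linarith [h3 ▸ h2]
  have h0 := key (Set.self_mem_Ici) (Set.mem_Ici.mpr ht) ht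
  simp only [Real.log_one, add_zero] at h0
  simp at h0
  linarith

lemma my_log_one_add_le {t : ℝ} (ht : 0 ≤ t) : Real.log (1 + t) ≤ t := by
  have := Real.log_le_sub_one_of_pos (x := 1 + t) (by linarith)
  linarith


lemma my_pdf_eq (n : ℕ) : (fun x : ℝ => (Real.toNNReal (gaussianPDFReal 0 1 x)) • (x ^ n : ℝ))
    = fun x : ℝ => (Real.sqrt (2 * π))⁻¹ * (x ^ n * Real.exp (-(1/2) * x ^ 2)) := by
  funext x
  rw [NNReal.smul_def, Real.coe_toNNReal _ (gaussianPDFReal_nonneg 0 1 x)]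
  simp only [gaussianPDFReal, smul_eq_mul]
  norm_num
  ring_nf

lemma my_integrable_pow_gaussian (n : ℕ) :
    Integrable (fun x : ℝ => x ^ n) (gaussianReal 0 1) := by
  rw [gaussianReal_of_var_ne_zero 0 one_ne_zero]
  have hmeas : Measurable fun x : ℝ => Real.toNNReal (gaussianPDFReal 0 1 x) :=
    (measurable_gaussianPDFReal 0 1).real_toNNReal
  rw [show gaussianPDF 0 1 = fun x => ((Real.toNNReal (gaussianPDFReal 0 1 x) : ℝ≥0) : ℝ≥0∞) from rfl]
  rw [integrable_withDensity_iff_integrable_smul hmeas]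
  rw [my_pdf_eq n]
  have h := (integrable_rpow_mul_exp_neg_mul_sq (by norm_num : (0:ℝ) < 1/2)
    (by have := Nat.cast_nonneg (α:=ℝ) n; linarith : (-1:ℝ) < (n:ℝ))).const_mul (Real.sqrt (2 * π))⁻¹
  have heq : (fun x : ℝ => (Real.sqrt (2 * π))⁻¹ * (x ^ ((n:ℕ):ℝ) * Real.exp (-(1/2) * x ^ 2)))
      = fun x : ℝ => (Real.sqrt (2 * π))⁻¹ * (x ^ n * Real.exp (-(1/2) * x ^ 2)) := by
    funext x; rw [Real.rpow_natCast]
  rw [← heq]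
  exact h

lemma my_gauss_int : ∫ x : ℝ, x ^ 4 * Real.exp (-(1/2) * x ^ 2) = 3 * Real.sqrt (2 * π) := by
  have h1 : ∀ x : ℝ, x ^ 4 * Real.exp (-(1/2) * x ^ 2)
      = |x| ^ 4 * Real.exp (-(1/2) * |x| ^ 2) := by
    intro x
    rw [sq_abs, pow_abs, abs_of_nonneg (by positivity : (0:ℝ) ≤ x ^ 4)]
  have h2 : ∫ x : ℝ, x ^ 4 * Real.exp (-(1/2) * x ^ 2)
      = 2 * ∫ x in Set.Ioi (0:ℝ), x ^ 4 * Real.exp (-(1/2) * x ^ 2) := by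
    rw [← integral_comp_abs (f := fun x => x ^ 4 * Real.exp (-(1/2) * x ^ 2))]
    exact integral_congr_ae (Filter.Eventually.of_forall fun x => h1 x)
  have h3 := integral_rpow_mul_exp_neg_mul_rpow (p := 2) (q := 4) (b := 1/2)
    two_pos (by norm_num) (by norm_num)
  have hconv : ∫ x in Set.Ioi (0:ℝ), x ^ (4:ℝ) * Real.exp (-(1/2) * x ^ (2:ℝ))
      = ∫ x in Set.Ioi (0:ℝ), x ^ 4 * Real.exp (-(1/2) * x ^ 2) := by
    refine setIntegral_congr_fun measurableSet_Ioi fun x hx => ?_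
    rw [show (4:ℝ) = ((4:ℕ):ℝ) by norm_num, show (2:ℝ) = ((2:ℕ):ℝ) by norm_num,
      Real.rpow_natCast, Real.rpow_natCast]
  have hG : Real.Gamma (((4:ℝ) + 1) / 2) = 3/4 * Real.sqrt π := by
    rw [show ((4:ℝ) + 1) / 2 = 3/2 + 1 by norm_num, Real.Gamma_add_one (by norm_num),
      show (3:ℝ)/2 = 1/2 + 1 by norm_num, Real.Gamma_add_one (by norm_num),
      Real.Gamma_one_half_eq]
    ring
  have hb : ((1:ℝ)/2) ^ (-((4:ℝ) + 1) / 2 : ℝ) = 4 * Real.sqrt 2 := by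
    rw [show (-((4:ℝ) + 1) / 2 : ℝ) = -(5/2) by norm_num, one_div,
      Real.inv_rpow (by norm_num), Real.rpow_neg (by norm_num), inv_inv,
      show (5:ℝ)/2 = 2 + 1/2 by norm_num, Real.rpow_add (by norm_num),
      ← Real.sqrt_eq_rpow]
    have h22 : (2:ℝ) ^ (2:ℝ) = 4 := by
      have := Real.rpow_natCast (2:ℝ) 2
      norm_num at this
      linarith
    rw [h22]
  rw [h2, ← hconv, h3, hG, hb, Real.sqrt_mul (by norm_num : (0:ℝ) ≤ 2)]
  ring

lemma my_integral_pow_four_gaussian : ∫ x, x ^ 4 ∂(gaussianReal 0 1) = 3 := by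
  rw [gaussianReal_of_var_ne_zero 0 one_ne_zero]
  have hmeas : Measurable fun x : ℝ => Real.toNNReal (gaussianPDFReal 0 1 x) :=
    (measurable_gaussianPDFReal 0 1).real_toNNReal
  rw [show gaussianPDF 0 1 = fun x => ((Real.toNNReal (gaussianPDFReal 0 1 x) : ℝ≥0) : ℝ≥0∞) from rfl]
  rw [integral_withDensity_eq_integral_smul hmeas]
  rw [show (fun x : ℝ => (Real.toNNReal (gaussianPDFReal 0 1 x) : ℝ≥0) • x ^ 4)
      = fun x : ℝ => (Real.sqrt (2 * π))⁻¹ * (x ^ 4 * Real.exp (-(1/2) * x ^ 2)) from my_pdf_eq 4]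
  rw [integral_const_mul, my_gauss_int]
  have : Real.sqrt (2*π) ≠ 0 := by positivity
  field_simp

end Aux

/-- For every integer `N ≥ 1`,
`E|1 − ∑_{j=1}^N log(1 + Z_j²/N)| ≥ E|1 − (1/N)∑_{j=1}^N Z_j²| − 3/(2N)`,
where the `Z_j` are i.i.d. standard normal. -/
theorem log_comparison_step
    {Ω : Type*} [MeasureSpace Ω] [IsProbabilityMeasure (ℙ : Measure Ω)]
    (Z : ℕ → Ω → ℝ) (hmeas : ∀ j, Measurable (Z j))
    (hindep : iIndepFun Z ℙ)
    (hdist : ∀ j, Measure.map (Z j) ℙ = gaussianReal 0 1) :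
    ∀ N : ℕ, 1 ≤ N →
      (∫ ω, |1 - (1 / (N : ℝ)) * ∑ j ∈ Finset.Icc 1 N, (Z j ω) ^ 2| ∂ℙ) - 3 / (2 * N) ≤
        ∫ ω, |1 - ∑ j ∈ Finset.Icc 1 N, Real.log (1 + (Z j ω) ^ 2 / N)| ∂ℙ := by
  intro N hN
  have hNpos : (0:ℝ) < N := by exact_mod_cast hN
  -- integrability of powers of Z j
  have hint : ∀ (n : ℕ) (j : ℕ), Integrable (fun ω => (Z j ω) ^ n) ℙ := by
    intro n j
    have h := my_integrable_pow_gaussian n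
    rw [← hdist j] at h
    exact (integrable_map_measure (measurable_id.pow_const n).aestronglyMeasurable (hmeas j).aemeasurable).mp h
  have hval4 : ∀ j : ℕ, ∫ ω, (Z j ω) ^ 4 ∂ℙ = 3 := by
    intro j
    rw [← my_integral_pow_four_gaussian, ← hdist j,
      integral_map (f := fun x : ℝ => x ^ 4) (hmeas j).aemeasurable (by exact (measurable_id.pow_const 4).aestronglyMeasurable)]
  -- abbreviations
  set S : Ω → ℝ := fun ω => (1 / (N:ℝ)) * ∑ j ∈ Finset.Icc 1 N, (Z j ω) ^ 2 with hS
  set L : Ω → ℝ := fun ω => ∑ j ∈ Finset.Icc 1 N, Real.log (1 + (Z j ω) ^ 2 / N) with hL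
  set Q : Ω → ℝ := fun ω => ∑ j ∈ Finset.Icc 1 N, (Z j ω) ^ 4 / (2 * (N:ℝ) ^ 2) with hQ
  -- integrability
  have hS_int : Integrable S ℙ :=
    (integrable_finset_sum _ fun j _ => hint 2 j).const_mul _
  have hQ_int : Integrable Q ℙ :=
    integrable_finset_sum _ fun j _ => (hint 4 j).div_const _
  have habsS_int : Integrable (fun ω => |1 - S ω|) ℙ := ((integrable_const (1:ℝ)).sub hS_int).abs
  have hL_meas : Measurable L := by
    apply Finset.measurable_sum
    intro j _
    exact Real.measurable_log.comp (by fun_prop)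
  -- pointwise bounds
  have hterm_nonneg : ∀ (j : ℕ) (ω : Ω), (0:ℝ) ≤ (Z j ω) ^ 2 / N :=
    fun j ω => div_nonneg (sq_nonneg _) hNpos.le
  have hL_le_S : ∀ ω, L ω ≤ S ω := by
    intro ω
    simp only [hS, hL]
    rw [Finset.mul_sum]
    refine Finset.sum_le_sum fun j _ => ?_
    have := my_log_one_add_le (hterm_nonneg j ω)
    calc Real.log (1 + (Z j ω) ^ 2 / N) ≤ (Z j ω) ^ 2 / N := this
      _ = 1 / (N:ℝ) * (Z j ω) ^ 2 := by ring
  have hL_nonneg : ∀ ω, 0 ≤ L ω := by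
    intro ω
    refine Finset.sum_nonneg fun j _ => Real.log_nonneg ?_
    linarith [hterm_nonneg j ω]
  have hSL_le_Q : ∀ ω, S ω - L ω ≤ Q ω := by
    intro ω
    simp only [hS, hL, hQ]
    rw [Finset.mul_sum, ← Finset.sum_sub_distrib]
    refine Finset.sum_le_sum fun j _ => ?_
    have h := my_log_one_add_ge (hterm_nonneg j ω)
    have heq : ((Z j ω) ^ 2 / N) ^ 2 / 2 = (Z j ω) ^ 4 / (2 * (N:ℝ) ^ 2) := by
      field_simp
    have hrw : 1 / (N:ℝ) * (Z j ω) ^ 2 = (Z j ω) ^ 2 / N := by ring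
    linarith [h, heq.le, heq.ge, hrw.le, hrw.ge]
  have hpt : ∀ ω, |1 - S ω| ≤ |1 - L ω| + Q ω := by
    intro ω
    have h1 : |1 - S ω| ≤ |1 - L ω| + |L ω - S ω| := by
      have := abs_add_le (1 - L ω) (L ω - S ω)
      simpa [sub_add_sub_cancel] using this
    have h2 : |L ω - S ω| = S ω - L ω := by
      rw [abs_sub_comm, abs_of_nonneg (by linarith [hL_le_S ω])]
    linarith [hSL_le_Q ω, h1, h2.le, h2.ge]
  -- integrability of |1 - L|
  have habsL_int : Integrable (fun ω => |1 - L ω|) ℙ := by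
    refine Integrable.mono' ((integrable_const (1:ℝ)).add hS_int) ?_ ?_
    · exact (measurable_const.sub hL_meas).abs.aestronglyMeasurable
    · refine Filter.Eventually.of_forall fun ω => ?_
      have h1 : |1 - L ω| ≤ 1 + L ω := by
        rw [abs_sub_comm]
        have := abs_sub (L ω) (1:ℝ)
        calc |L ω - 1| ≤ |L ω| + |1| := abs_sub _ _
          _ = L ω + 1 := by rw [abs_of_nonneg (hL_nonneg ω), abs_one]
          _ = 1 + L ω := by ring
      calc ‖|1 - L ω|‖ = |1 - L ω| := by rw [Real.norm_eq_abs, abs_abs]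
        _ ≤ 1 + L ω := h1
        _ ≤ 1 + S ω := by linarith [hL_le_S ω]
  -- integral of Q
  have hQ_val : ∫ ω, Q ω ∂ℙ = 3 / (2 * N) := by
    simp only [hQ]
    rw [integral_finset_sum _ fun j _ => (hint 4 j).div_const _]
    have : ∀ j ∈ Finset.Icc 1 N, ∫ ω, (Z j ω) ^ 4 / (2 * (N:ℝ) ^ 2) ∂ℙ = 3 / (2 * (N:ℝ) ^ 2) := by
      intro j _
      rw [integral_div, hval4 j]
    rw [Finset.sum_congr rfl this, Finset.sum_const, Nat.card_Icc]
    simp only [Nat.add_sub_cancel, nsmul_eq_mul]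
    field_simp
  -- conclude
  have hmain : ∫ ω, |1 - S ω| ∂ℙ ≤ (∫ ω, |1 - L ω| ∂ℙ) + 3 / (2 * N) := by
    calc ∫ ω, |1 - S ω| ∂ℙ ≤ ∫ ω, (|1 - L ω| + Q ω) ∂ℙ :=
          integral_mono habsS_int (habsL_int.add hQ_int) hpt
      _ = (∫ ω, |1 - L ω| ∂ℙ) + ∫ ω, Q ω ∂ℙ := integral_add habsL_int hQ_int
      _ = (∫ ω, |1 - L ω| ∂ℙ) + 3 / (2 * N) := by rw [hQ_val]
  linarith [hmain]
end

section
/- Fix h > 0 and an integer d ≥ 2. Let (z_k)_{k=1}^d, (W_k)_{k=1}^d and (λ_{kl})_{1 ≤ k < l ≤ d} be jointly independent real Gaussian random variables with z_k ~ N(0, h/12), W_k ~ N(0, h) and λ_{kl} ~ N(0, h²/12). For 1 ≤ k < l ≤ d define B_{kl} := z_k W_l − z_l W_k + λ_{kl}. Then: (i) E[B_{kl}] = 0; (ii) E[B_{kl}²] = h²/4; (iii) E[B_{kl} B_{k'l'}] = 0 whenever (k,l) ≠ (k',l'); and (iv) E[B_{kl} W_m] = 0 for every m ∈ {1,…,d}.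 (These are the moment properties of the Gaussian approximations B^{(j)} of the Lévy area increments in equation (e-b-def), showing that they match the mean and covariance structure of Brownian Lévy area.) -/
open MeasureTheory ProbabilityTheory Real NNReal ENNReal

lemma integrable_sq_mul_exp_neg_mul_sq {b : ℝ} (hb : 0 < b) :
    Integrable (fun x : ℝ => x ^ 2 * Real.exp (-b * x ^ 2)) := by
  have h2 : 0 < b / 2 := by linarith
  refine Integrable.mono' ((integrable_exp_neg_mul_sq h2).const_mul (2 / b)) ?_ ?_
  · exact (Continuous.mul (continuous_pow 2) (Continuous.rexp (by continuity))).aestronglyMeasurable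
  · refine Filter.Eventually.of_forall fun x => ?_
    have hx2 : x ^ 2 * Real.exp (-b * x ^ 2) ≤ 2 / b * Real.exp (-(b / 2) * x ^ 2) := by
      have h1 : x ^ 2 ≤ 2 / b * Real.exp (b / 2 * x ^ 2) := by
        have := Real.add_one_le_exp (b / 2 * x ^ 2)
        have h3 : b / 2 * x ^ 2 ≤ Real.exp (b / 2 * x ^ 2) := by linarith
        calc x ^ 2 = 2 / b * (b / 2 * x ^ 2) := by field_simp
          _ ≤ 2 / b * Real.exp (b / 2 * x ^ 2) := by
              apply mul_le_mul_of_nonneg_left h3 (by positivity)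
      calc x ^ 2 * Real.exp (-b * x ^ 2)
          ≤ 2 / b * Real.exp (b / 2 * x ^ 2) * Real.exp (-b * x ^ 2) := by
            apply mul_le_mul_of_nonneg_right h1 (Real.exp_pos _).le
        _ = 2 / b * Real.exp (-(b / 2) * x ^ 2) := by
            rw [mul_assoc, ← Real.exp_add]; ring_nf
    rw [Real.norm_eq_abs, abs_of_nonneg (by positivity)]
    exact hx2

lemma integral_mul_exp_neg_mul_sq_eq_zero {b : ℝ} (hb : 0 < b) :
    (∫ x : ℝ, x * Real.exp (-b * x ^ 2)) = 0 := by
  have hderiv : ∀ x : ℝ, HasDerivAt (fun y : ℝ => -(2 * b)⁻¹ * Real.exp (-b * y ^ 2))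
      (x * Real.exp (-b * x ^ 2)) x := by
    intro x
    have h1 : HasDerivAt (fun y : ℝ => -b * y ^ 2) (-b * (2 * x ^ 1)) x :=
      (hasDerivAt_pow 2 x).const_mul (-b)
    have h2 : HasDerivAt (fun y : ℝ => -(2 * b)⁻¹ * Real.exp (-b * y ^ 2))
        (-(2 * b)⁻¹ * (Real.exp (-b * x ^ 2) * (-b * (2 * x ^ 1)))) x :=
      (h1.exp).const_mul (-(2 * b)⁻¹)
    convert h2 using 1
    have hb0 : b ≠ 0 := hb.ne'
    field_simp
  exact MeasureTheory.integral_eq_zero_of_hasDerivAt_of_integrable hderiv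
    (integrable_mul_exp_neg_mul_sq hb) ((integrable_exp_neg_mul_sq hb).const_mul _)

lemma integral_sq_mul_exp_neg_mul_sq {b : ℝ} (hb : 0 < b) :
    (∫ x : ℝ, x ^ 2 * Real.exp (-b * x ^ 2)) = (2 * b)⁻¹ * ∫ x : ℝ, Real.exp (-b * x ^ 2) := by
  have hderiv : ∀ x : ℝ, HasDerivAt (fun y : ℝ => y * Real.exp (-b * y ^ 2))
      (Real.exp (-b * x ^ 2) - 2 * b * (x ^ 2 * Real.exp (-b * x ^ 2))) x := by
    intro x
    have h1 : HasDerivAt (fun y : ℝ => -b * y ^ 2) (-b * (2 * x ^ 1)) x :=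
      (hasDerivAt_pow 2 x).const_mul (-b)
    have h2 : HasDerivAt (fun y : ℝ => y * Real.exp (-b * y ^ 2))
        (1 * Real.exp (-b * x ^ 2) + x * (Real.exp (-b * x ^ 2) * (-b * (2 * x ^ 1)))) x :=
      (hasDerivAt_id x).mul h1.exp
    convert h2 using 1
    ring
  have h0 := MeasureTheory.integral_eq_zero_of_hasDerivAt_of_integrable hderiv
    ((integrable_exp_neg_mul_sq hb).sub ((integrable_sq_mul_exp_neg_mul_sq hb).const_mul (2 * b)))
    (integrable_mul_exp_neg_mul_sq hb)
  rw [integral_sub (integrable_exp_neg_mul_sq hb)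
    ((integrable_sq_mul_exp_neg_mul_sq hb).const_mul (2 * b)),
    MeasureTheory.integral_const_mul] at h0
  have hb' : (2 : ℝ) * b ≠ 0 := by positivity
  field_simp at h0 ⊢
  linarith

lemma gaussianReal_integral_eq {v : ℝ≥0} (hv : v ≠ 0) (g : ℝ → ℝ) :
    (∫ x, g x ∂(gaussianReal 0 v)) = ∫ x, gaussianPDFReal 0 v x * g x := by
  rw [gaussianReal_of_var_ne_zero _ hv]
  have hd : (gaussianPDF 0 v)
      = fun x => ((Real.toNNReal (gaussianPDFReal 0 v x) : ℝ≥0) : ℝ≥0∞) := by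
    funext x; rfl
  rw [hd, integral_withDensity_eq_integral_smul
    ((measurable_gaussianPDFReal 0 v).real_toNNReal) g]
  congr 1
  funext x
  simp [NNReal.smul_def, Real.coe_toNNReal _ (gaussianPDFReal_nonneg 0 v x)]

lemma gaussianReal_integrable_iff {v : ℝ≥0} (hv : v ≠ 0) (g : ℝ → ℝ) :
    Integrable g (gaussianReal 0 v) ↔ Integrable (fun x => gaussianPDFReal 0 v x * g x) := by
  rw [gaussianReal_of_var_ne_zero _ hv]
  have hd : (gaussianPDF 0 v)
      = fun x => ((Real.toNNReal (gaussianPDFReal 0 v x) : ℝ≥0) : ℝ≥0∞) := by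
    funext x; rfl
  rw [hd, integrable_withDensity_iff_integrable_smul
    ((measurable_gaussianPDFReal 0 v).real_toNNReal)]
  constructor <;> intro hh <;>
  · refine hh.congr (Filter.Eventually.of_forall fun x => ?_)
    simp [NNReal.smul_def, Real.coe_toNNReal _ (gaussianPDFReal_nonneg 0 v x)]

lemma gaussianReal_moments {v : ℝ≥0} (hv : v ≠ 0) :
    Integrable (fun x : ℝ => x) (gaussianReal 0 v) ∧
    Integrable (fun x : ℝ => x ^ 2) (gaussianReal 0 v) ∧
    (∫ x, x ∂(gaussianReal 0 v)) = 0 ∧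
    (∫ x, x ^ 2 ∂(gaussianReal 0 v)) = (v : ℝ) := by
  have hv' : (0 : ℝ) < v := lt_of_le_of_ne (v.coe_nonneg) (by exact_mod_cast (Ne.symm hv))
  set b : ℝ := (2 * (v : ℝ))⁻¹ with hbdef
  have hb : 0 < b := by positivity
  set c : ℝ := (Real.sqrt (2 * π * v))⁻¹ with hcdef
  have hpdf : ∀ x : ℝ, gaussianPDFReal 0 v x = c * Real.exp (-b * x ^ 2) := by
    intro x
    rw [gaussianPDFReal]
    congr 1
    rw [hbdef]
    have h2v : (2 : ℝ) * v ≠ 0 := by positivity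
    field_simp
    rw [sub_zero]
  have hnorm : c * (∫ x : ℝ, Real.exp (-b * x ^ 2)) = 1 := by
    have := integral_gaussianPDFReal_eq_one 0 hv
    rw [show (fun x => gaussianPDFReal 0 v x) = fun x => c * Real.exp (-b * x ^ 2) from
      funext hpdf] at this
    rwa [MeasureTheory.integral_const_mul] at this
  refine ⟨?_, ?_, ?_, ?_⟩
  · rw [gaussianReal_integrable_iff hv]
    have : (fun x : ℝ => gaussianPDFReal 0 v x * x)
        = fun x => c * (x * Real.exp (-b * x ^ 2)) := by
      funext x; rw [hpdf]; ring
    rw [this]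
    exact (integrable_mul_exp_neg_mul_sq hb).const_mul c
  · rw [gaussianReal_integrable_iff hv]
    have : (fun x : ℝ => gaussianPDFReal 0 v x * x ^ 2)
        = fun x => c * (x ^ 2 * Real.exp (-b * x ^ 2)) := by
      funext x; rw [hpdf]; ring
    rw [this]
    exact (integrable_sq_mul_exp_neg_mul_sq hb).const_mul c
  · rw [gaussianReal_integral_eq hv]
    have : (fun x : ℝ => gaussianPDFReal 0 v x * x)
        = fun x => c * (x * Real.exp (-b * x ^ 2)) := by
      funext x; rw [hpdf]; ring
    rw [this, MeasureTheory.integral_const_mul, integral_mul_exp_neg_mul_sq_eq_zero hb, mul_zero]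
  · rw [gaussianReal_integral_eq hv]
    have : (fun x : ℝ => gaussianPDFReal 0 v x * x ^ 2)
        = fun x => c * (x ^ 2 * Real.exp (-b * x ^ 2)) := by
      funext x; rw [hpdf]; ring
    rw [this, MeasureTheory.integral_const_mul, integral_sq_mul_exp_neg_mul_sq hb]
    have h2b : (2 : ℝ) * b = (v : ℝ)⁻¹ := by
      rw [hbdef]; field_simp
    rw [h2b]
    calc c * ((((v : ℝ))⁻¹)⁻¹ * ∫ x : ℝ, Real.exp (-b * x ^ 2))
        = (v : ℝ) * (c * ∫ x : ℝ, Real.exp (-b * x ^ 2)) := by rw [inv_inv]; ring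
      _ = v := by rw [hnorm, mul_one]

lemma map_gauss_moments {Ω : Type*} [MeasureSpace Ω] {X : Ω → ℝ} (hX : Measurable X)
    {v : ℝ≥0} (hv : v ≠ 0) (hmap : Measure.map X ℙ = gaussianReal 0 v) :
    Integrable X ℙ ∧ Integrable (fun ω => X ω ^ 2) ℙ ∧
    (∫ ω, X ω ∂ℙ) = 0 ∧ (∫ ω, X ω ^ 2 ∂ℙ) = (v : ℝ) := by
  obtain ⟨h1, h2, h3, h4⟩ := gaussianReal_moments hv
  rw [← hmap] at h1 h2 h3 h4
  refine ⟨?_, ?_, ?_, ?_⟩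
  · exact (integrable_map_measure measurable_id.aestronglyMeasurable hX.aemeasurable).mp
      (by exact h1)
  · exact (integrable_map_measure (measurable_id.pow_const 2).aestronglyMeasurable
      hX.aemeasurable).mp (by simpa using h2)
  · rw [← h3, integral_map hX.aemeasurable (f := fun x : ℝ => x)
      measurable_id.aestronglyMeasurable]
  · rw [← h4, integral_map hX.aemeasurable (f := fun x : ℝ => x ^ 2)
      (measurable_id.pow_const 2).aestronglyMeasurable]

/-- Fix `h > 0` and `d ≥ 2`. Let `(z_k)`, `(W_k)` and `(λ_{kl})` be
jointly independent centered Gaussians with variances `h/12`, `h` and `h²/12`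
respectively, and set `B_{kl} := z_k W_l − z_l W_k + λ_{kl}` for `k < l`. Then
(i) `E[B_{kl}] = 0`; (ii) `E[B_{kl}²] = h²/4`; (iii) `E[B_{kl} B_{k'l'}] = 0` for
`(k,l) ≠ (k',l')`; (iv) `E[B_{kl} W_m] = 0` for every `m`. -/
theorem gaussian_levy_area_moments
    {Ω : Type*} [MeasureSpace Ω] [IsProbabilityMeasure (ℙ : Measure Ω)]
    (d : ℕ) (hd : 2 ≤ d) (h : NNReal) (hh : 0 < h)
    (F : (Fin d ⊕ Fin d ⊕ Fin d × Fin d) → Ω → ℝ)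
    (hmeas : ∀ i, Measurable (F i))
    (hindep : iIndepFun F ℙ)
    (hz : ∀ k : Fin d, Measure.map (F (Sum.inl k)) ℙ = gaussianReal 0 (h / 12))
    (hW : ∀ k : Fin d, Measure.map (F (Sum.inr (Sum.inl k))) ℙ = gaussianReal 0 h)
    (hlam : ∀ k l : Fin d,
      Measure.map (F (Sum.inr (Sum.inr (k, l)))) ℙ = gaussianReal 0 (h ^ 2 / 12))
    (B : Fin d → Fin d → Ω → ℝ)
    (hB : ∀ k l : Fin d, B k l = fun ω =>
      F (Sum.inl k) ω * F (Sum.inr (Sum.inl l)) ω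
        - F (Sum.inl l) ω * F (Sum.inr (Sum.inl k)) ω
        + F (Sum.inr (Sum.inr (k, l))) ω) :
    (∀ k l : Fin d, k < l → (∫ ω, B k l ω ∂ℙ) = 0) ∧
    (∀ k l : Fin d, k < l → (∫ ω, (B k l ω) ^ 2 ∂ℙ) = (h : ℝ) ^ 2 / 4) ∧
    (∀ k l k' l' : Fin d, k < l → k' < l' → (k, l) ≠ (k', l') →
      (∫ ω, B k l ω * B k' l' ω ∂ℙ) = 0) ∧
    (∀ k l m : Fin d, k < l →
      (∫ ω, B k l ω * F (Sum.inr (Sum.inl m)) ω ∂ℙ) = 0) := by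
  have hv1 : (h / 12 : ℝ≥0) ≠ 0 := div_ne_zero hh.ne' (by norm_num)
  have hv2 : h ≠ 0 := hh.ne'
  have hv3 : (h ^ 2 / 12 : ℝ≥0) ≠ 0 := div_ne_zero (pow_ne_zero 2 hh.ne') (by norm_num)
  have hc1 : ((h / 12 : ℝ≥0) : ℝ) = (h : ℝ) / 12 := by push_cast; ring
  have hc3 : ((h ^ 2 / 12 : ℝ≥0) : ℝ) = (h : ℝ) ^ 2 / 12 := by push_cast; ring
  have hZ := fun a : Fin d => map_gauss_moments (hmeas (Sum.inl a)) hv1 (hz a)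
  have hWm := fun a : Fin d => map_gauss_moments (hmeas (Sum.inr (Sum.inl a))) hv2 (hW a)
  have hL := fun p : Fin d × Fin d =>
    map_gauss_moments (hmeas (Sum.inr (Sum.inr p))) hv3 (hlam p.1 p.2)
  -- pairwise second moments
  have EZZ : ∀ a c : Fin d,
      Integrable (fun ω => F (Sum.inl a) ω * F (Sum.inl c) ω) ℙ ∧
      (∫ ω, F (Sum.inl a) ω * F (Sum.inl c) ω ∂ℙ)
        = (if a = c then (h : ℝ) / 12 else 0) := by
    intro a c
    by_cases hac : a = c
    · subst hac
      rw [if_pos rfl]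
      constructor
      · simpa [pow_two] using (hZ a).2.1
      · have h2 := (hZ a).2.2.2
        simp only [pow_two] at h2
        exact h2.trans hc1
    · rw [if_neg hac]
      have hi : IndepFun (F (Sum.inl a)) (F (Sum.inl c)) ℙ :=
        hindep.indepFun (by simp [hac])
      refine ⟨hi.integrable_mul (hZ a).1 (hZ c).1, ?_⟩
      calc (∫ ω, F (Sum.inl a) ω * F (Sum.inl c) ω ∂ℙ)
          = (∫ ω, F (Sum.inl a) ω ∂ℙ) * ∫ ω, F (Sum.inl c) ω ∂ℙ :=
            hi.integral_fun_mul_eq_mul_integral (hZ a).1.aestronglyMeasurable (hZ c).1.aestronglyMeasurable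
        _ = 0 := by rw [(hZ a).2.2.1, zero_mul]
  have EWW : ∀ b e : Fin d,
      Integrable (fun ω => F (Sum.inr (Sum.inl b)) ω * F (Sum.inr (Sum.inl e)) ω) ℙ ∧
      (∫ ω, F (Sum.inr (Sum.inl b)) ω * F (Sum.inr (Sum.inl e)) ω ∂ℙ)
        = (if b = e then (h : ℝ) else 0) := by
    intro b e
    by_cases hbe : b = e
    · subst hbe
      rw [if_pos rfl]
      constructor
      · simpa [pow_two] using (hWm b).2.1
      · have h2 := (hWm b).2.2.2
        simp only [pow_two] at h2
        exact h2
    · rw [if_neg hbe]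
      have hi : IndepFun (F (Sum.inr (Sum.inl b))) (F (Sum.inr (Sum.inl e))) ℙ :=
        hindep.indepFun (by simp [hbe])
      refine ⟨hi.integrable_mul (hWm b).1 (hWm e).1, ?_⟩
      calc (∫ ω, F (Sum.inr (Sum.inl b)) ω * F (Sum.inr (Sum.inl e)) ω ∂ℙ)
          = (∫ ω, F (Sum.inr (Sum.inl b)) ω ∂ℙ) * ∫ ω, F (Sum.inr (Sum.inl e)) ω ∂ℙ :=
            hi.integral_fun_mul_eq_mul_integral (hWm b).1.aestronglyMeasurable (hWm e).1.aestronglyMeasurable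
        _ = 0 := by rw [(hWm b).2.2.1, zero_mul]
  have ELLi : ∀ p q : Fin d × Fin d,
      Integrable (fun ω => F (Sum.inr (Sum.inr p)) ω * F (Sum.inr (Sum.inr q)) ω) ℙ := by
    intro p q
    by_cases hpq : p = q
    · subst hpq
      simpa [pow_two] using (hL p).2.1
    · have hi : IndepFun (F (Sum.inr (Sum.inr p))) (F (Sum.inr (Sum.inr q))) ℙ :=
        hindep.indepFun (by simp [hpq])
      exact hi.integrable_mul (hL p).1 (hL q).1
  have ELL0 : ∀ p q : Fin d × Fin d, p ≠ q →
      (∫ ω, F (Sum.inr (Sum.inr p)) ω * F (Sum.inr (Sum.inr q)) ω ∂ℙ) = 0 := by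
    intro p q hpq
    have hi : IndepFun (F (Sum.inr (Sum.inr p))) (F (Sum.inr (Sum.inr q))) ℙ :=
      hindep.indepFun (by simp [hpq])
    calc (∫ ω, F (Sum.inr (Sum.inr p)) ω * F (Sum.inr (Sum.inr q)) ω ∂ℙ)
        = (∫ ω, F (Sum.inr (Sum.inr p)) ω ∂ℙ) * ∫ ω, F (Sum.inr (Sum.inr q)) ω ∂ℙ :=
          hi.integral_fun_mul_eq_mul_integral (hL p).1.aestronglyMeasurable (hL q).1.aestronglyMeasurable
      _ = 0 := by rw [(hL p).2.2.1, zero_mul]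
  have ELLsq : ∀ p : Fin d × Fin d,
      (∫ ω, F (Sum.inr (Sum.inr p)) ω * F (Sum.inr (Sum.inr p)) ω ∂ℙ)
        = (h : ℝ) ^ 2 / 12 := by
    intro p
    have h2 := (hL p).2.2.2
    rw [hc3] at h2
    simpa only [pow_two] using h2
  have EZW : ∀ a b : Fin d,
      Integrable (fun ω => F (Sum.inl a) ω * F (Sum.inr (Sum.inl b)) ω) ℙ ∧
      (∫ ω, F (Sum.inl a) ω * F (Sum.inr (Sum.inl b)) ω ∂ℙ) = 0 := by
    intro a b
    have hi : IndepFun (F (Sum.inl a)) (F (Sum.inr (Sum.inl b))) ℙ :=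
      hindep.indepFun (by simp)
    refine ⟨hi.integrable_mul (hZ a).1 (hWm b).1, ?_⟩
    calc (∫ ω, F (Sum.inl a) ω * F (Sum.inr (Sum.inl b)) ω ∂ℙ)
        = (∫ ω, F (Sum.inl a) ω ∂ℙ) * ∫ ω, F (Sum.inr (Sum.inl b)) ω ∂ℙ :=
          hi.integral_fun_mul_eq_mul_integral (hZ a).1.aestronglyMeasurable (hWm b).1.aestronglyMeasurable
      _ = 0 := by rw [(hZ a).2.2.1, zero_mul]
  have EWL : ∀ (b : Fin d) (p : Fin d × Fin d),
      Integrable (fun ω => F (Sum.inr (Sum.inl b)) ω * F (Sum.inr (Sum.inr p)) ω) ℙ ∧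
      (∫ ω, F (Sum.inr (Sum.inl b)) ω * F (Sum.inr (Sum.inr p)) ω ∂ℙ) = 0 := by
    intro b p
    have hi : IndepFun (F (Sum.inr (Sum.inl b))) (F (Sum.inr (Sum.inr p))) ℙ :=
      hindep.indepFun (by simp)
    refine ⟨hi.integrable_mul (hWm b).1 (hL p).1, ?_⟩
    calc (∫ ω, F (Sum.inr (Sum.inl b)) ω * F (Sum.inr (Sum.inr p)) ω ∂ℙ)
        = (∫ ω, F (Sum.inr (Sum.inl b)) ω ∂ℙ) * ∫ ω, F (Sum.inr (Sum.inr p)) ω ∂ℙ :=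
          hi.integral_fun_mul_eq_mul_integral (hWm b).1.aestronglyMeasurable (hL p).1.aestronglyMeasurable
      _ = 0 := by rw [(hL p).2.2.1, mul_zero]
  -- quadruple moments
  have EZZWW : ∀ a c b e : Fin d,
      Integrable (fun ω => F (Sum.inl a) ω * F (Sum.inl c) ω *
        (F (Sum.inr (Sum.inl b)) ω * F (Sum.inr (Sum.inl e)) ω)) ℙ ∧
      (∫ ω, F (Sum.inl a) ω * F (Sum.inl c) ω *
        (F (Sum.inr (Sum.inl b)) ω * F (Sum.inr (Sum.inl e)) ω) ∂ℙ)
        = (if a = c then (h : ℝ) / 12 else 0) * (if b = e then (h : ℝ) else 0) := by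
    intro a c b e
    have hi : IndepFun (F (Sum.inl a) * F (Sum.inl c))
        (F (Sum.inr (Sum.inl b)) * F (Sum.inr (Sum.inl e))) ℙ :=
      hindep.indepFun_mul_mul hmeas _ _ _ _ (by simp) (by simp) (by simp) (by simp)
    refine ⟨hi.integrable_mul (EZZ a c).1 (EWW b e).1, ?_⟩
    calc (∫ ω, F (Sum.inl a) ω * F (Sum.inl c) ω *
          (F (Sum.inr (Sum.inl b)) ω * F (Sum.inr (Sum.inl e)) ω) ∂ℙ)
        = (∫ ω, F (Sum.inl a) ω * F (Sum.inl c) ω ∂ℙ) *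
          ∫ ω, F (Sum.inr (Sum.inl b)) ω * F (Sum.inr (Sum.inl e)) ω ∂ℙ :=
          hi.integral_fun_mul_eq_mul_integral (EZZ a c).1.aestronglyMeasurable (EWW b e).1.aestronglyMeasurable
      _ = _ := by rw [(EZZ a c).2, (EWW b e).2]
  have EZWL : ∀ (a b : Fin d) (p : Fin d × Fin d),
      Integrable (fun ω => F (Sum.inl a) ω * F (Sum.inr (Sum.inl b)) ω *
        F (Sum.inr (Sum.inr p)) ω) ℙ ∧
      (∫ ω, F (Sum.inl a) ω * F (Sum.inr (Sum.inl b)) ω * F (Sum.inr (Sum.inr p)) ω ∂ℙ)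
        = 0 := by
    intro a b p
    have hi : IndepFun (F (Sum.inl a) * F (Sum.inr (Sum.inl b)))
        (F (Sum.inr (Sum.inr p))) ℙ :=
      hindep.indepFun_mul_left hmeas _ _ _ (by simp) (by simp)
    refine ⟨hi.integrable_mul (EZW a b).1 (hL p).1, ?_⟩
    calc (∫ ω, F (Sum.inl a) ω * F (Sum.inr (Sum.inl b)) ω * F (Sum.inr (Sum.inr p)) ω ∂ℙ)
        = (∫ ω, F (Sum.inl a) ω * F (Sum.inr (Sum.inl b)) ω ∂ℙ) *
          ∫ ω, F (Sum.inr (Sum.inr p)) ω ∂ℙ :=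
          hi.integral_fun_mul_eq_mul_integral (EZW a b).1.aestronglyMeasurable (hL p).1.aestronglyMeasurable
      _ = 0 := by rw [(hL p).2.2.1, mul_zero]
  have EZWW : ∀ a b e : Fin d,
      Integrable (fun ω => F (Sum.inl a) ω *
        (F (Sum.inr (Sum.inl b)) ω * F (Sum.inr (Sum.inl e)) ω)) ℙ ∧
      (∫ ω, F (Sum.inl a) ω *
        (F (Sum.inr (Sum.inl b)) ω * F (Sum.inr (Sum.inl e)) ω) ∂ℙ) = 0 := by
    intro a b e
    have hi : IndepFun (F (Sum.inl a))
        (F (Sum.inr (Sum.inl b)) * F (Sum.inr (Sum.inl e))) ℙ :=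
      hindep.indepFun_mul_right hmeas _ _ _ (by simp) (by simp)
    refine ⟨hi.integrable_mul (hZ a).1 (EWW b e).1, ?_⟩
    calc (∫ ω, F (Sum.inl a) ω *
          (F (Sum.inr (Sum.inl b)) ω * F (Sum.inr (Sum.inl e)) ω) ∂ℙ)
        = (∫ ω, F (Sum.inl a) ω ∂ℙ) *
          ∫ ω, F (Sum.inr (Sum.inl b)) ω * F (Sum.inr (Sum.inl e)) ω ∂ℙ :=
          hi.integral_fun_mul_eq_mul_integral (hZ a).1.aestronglyMeasurable (EWW b e).1.aestronglyMeasurable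
      _ = 0 := by rw [(hZ a).2.2.1, zero_mul]
  -- master formula for E[B_{kl} B_{k'l'}]
  have master : ∀ k l k' l' : Fin d, (∫ ω, B k l ω * B k' l' ω ∂ℙ) =
      (if k = k' then (h : ℝ) / 12 else 0) * (if l = l' then (h : ℝ) else 0)
      - (if k = l' then (h : ℝ) / 12 else 0) * (if l = k' then (h : ℝ) else 0)
      - (if l = k' then (h : ℝ) / 12 else 0) * (if k = l' then (h : ℝ) else 0)
      + (if l = l' then (h : ℝ) / 12 else 0) * (if k = k' then (h : ℝ) else 0)
      + (∫ ω, F (Sum.inr (Sum.inr (k, l))) ω * F (Sum.inr (Sum.inr (k', l'))) ω ∂ℙ) := by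
    intro k l k' l'
    set t1 : Ω → ℝ := fun ω => F (Sum.inl k) ω * F (Sum.inl k') ω *
      (F (Sum.inr (Sum.inl l)) ω * F (Sum.inr (Sum.inl l')) ω) with ht1
    set t2 : Ω → ℝ := fun ω => F (Sum.inl k) ω * F (Sum.inl l') ω *
      (F (Sum.inr (Sum.inl l)) ω * F (Sum.inr (Sum.inl k')) ω) with ht2
    set t3 : Ω → ℝ := fun ω => F (Sum.inl l) ω * F (Sum.inl k') ω *
      (F (Sum.inr (Sum.inl k)) ω * F (Sum.inr (Sum.inl l')) ω) with ht3
    set t4 : Ω → ℝ := fun ω => F (Sum.inl l) ω * F (Sum.inl l') ω *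
      (F (Sum.inr (Sum.inl k)) ω * F (Sum.inr (Sum.inl k')) ω) with ht4
    set t5 : Ω → ℝ := fun ω => F (Sum.inl k) ω * F (Sum.inr (Sum.inl l)) ω *
      F (Sum.inr (Sum.inr (k', l'))) ω with ht5
    set t6 : Ω → ℝ := fun ω => F (Sum.inl l) ω * F (Sum.inr (Sum.inl k)) ω *
      F (Sum.inr (Sum.inr (k', l'))) ω with ht6
    set t7 : Ω → ℝ := fun ω => F (Sum.inl k') ω * F (Sum.inr (Sum.inl l')) ω *
      F (Sum.inr (Sum.inr (k, l))) ω with ht7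
    set t8 : Ω → ℝ := fun ω => F (Sum.inl l') ω * F (Sum.inr (Sum.inl k')) ω *
      F (Sum.inr (Sum.inr (k, l))) ω with ht8
    set t9 : Ω → ℝ := fun ω => F (Sum.inr (Sum.inr (k, l))) ω *
      F (Sum.inr (Sum.inr (k', l'))) ω with ht9
    have hexp : (fun ω => B k l ω * B k' l' ω) = fun ω =>
        t1 ω - t2 ω - t3 ω + t4 ω + t5 ω - t6 ω + t7 ω - t8 ω + t9 ω := by
      funext ω
      simp only [hB, ht1, ht2, ht3, ht4, ht5, ht6, ht7, ht8, ht9]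
      ring
    have A1 : Integrable t1 ℙ := (EZZWW k k' l l').1
    have A2 : Integrable t2 ℙ := (EZZWW k l' l k').1
    have A3 : Integrable t3 ℙ := (EZZWW l k' k l').1
    have A4 : Integrable t4 ℙ := (EZZWW l l' k k').1
    have A5 : Integrable t5 ℙ := (EZWL k l (k', l')).1
    have A6 : Integrable t6 ℙ := (EZWL l k (k', l')).1
    have A7 : Integrable t7 ℙ := (EZWL k' l' (k, l)).1
    have A8 : Integrable t8 ℙ := (EZWL l' k' (k, l)).1
    have A9 : Integrable t9 ℙ := ELLi (k, l) (k', l')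
    have V1 : (∫ ω, t1 ω ∂ℙ)
        = (if k = k' then (h : ℝ) / 12 else 0) * (if l = l' then (h : ℝ) else 0) :=
      (EZZWW k k' l l').2
    have V2 : (∫ ω, t2 ω ∂ℙ)
        = (if k = l' then (h : ℝ) / 12 else 0) * (if l = k' then (h : ℝ) else 0) :=
      (EZZWW k l' l k').2
    have V3 : (∫ ω, t3 ω ∂ℙ)
        = (if l = k' then (h : ℝ) / 12 else 0) * (if k = l' then (h : ℝ) else 0) :=
      (EZZWW l k' k l').2
    have V4 : (∫ ω, t4 ω ∂ℙ)
        = (if l = l' then (h : ℝ) / 12 else 0) * (if k = k' then (h : ℝ) else 0) :=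
      (EZZWW l l' k k').2
    have V5 : (∫ ω, t5 ω ∂ℙ) = 0 := (EZWL k l (k', l')).2
    have V6 : (∫ ω, t6 ω ∂ℙ) = 0 := (EZWL l k (k', l')).2
    have V7 : (∫ ω, t7 ω ∂ℙ) = 0 := (EZWL k' l' (k, l)).2
    have V8 : (∫ ω, t8 ω ∂ℙ) = 0 := (EZWL l' k' (k, l)).2
    have P2 : Integrable (fun ω => t1 ω - t2 ω) ℙ := A1.sub A2
    have P3 : Integrable (fun ω => t1 ω - t2 ω - t3 ω) ℙ := P2.sub A3
    have P4 : Integrable (fun ω => t1 ω - t2 ω - t3 ω + t4 ω) ℙ := P3.add A4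
    have P5 : Integrable (fun ω => t1 ω - t2 ω - t3 ω + t4 ω + t5 ω) ℙ := P4.add A5
    have P6 : Integrable (fun ω => t1 ω - t2 ω - t3 ω + t4 ω + t5 ω - t6 ω) ℙ := P5.sub A6
    have P7 : Integrable (fun ω => t1 ω - t2 ω - t3 ω + t4 ω + t5 ω - t6 ω + t7 ω) ℙ :=
      P6.add A7
    have P8 : Integrable (fun ω => t1 ω - t2 ω - t3 ω + t4 ω + t5 ω - t6 ω + t7 ω - t8 ω) ℙ :=
      P7.sub A8
    rw [hexp, integral_add P8 A9, integral_sub P7 A8, integral_add P6 A7,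
      integral_sub P5 A6, integral_add P4 A5, integral_add P3 A4,
      integral_sub P2 A3, integral_sub A1 A2, V1, V2, V3, V4, V5, V6, V7, V8]
    have V9 : (∫ ω, t9 ω ∂ℙ)
        = ∫ ω, F (Sum.inr (Sum.inr (k, l))) ω * F (Sum.inr (Sum.inr (k', l'))) ω ∂ℙ := rfl
    rw [V9]
    ring
  refine ⟨?_, ?_, ?_, ?_⟩
  · -- (i)
    intro k l _
    have hexp : (fun ω => B k l ω) = fun ω =>
        F (Sum.inl k) ω * F (Sum.inr (Sum.inl l)) ω
          - F (Sum.inl l) ω * F (Sum.inr (Sum.inl k)) ω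
          + F (Sum.inr (Sum.inr (k, l))) ω := by
      funext ω; simp only [hB]
    have P : Integrable (fun ω => F (Sum.inl k) ω * F (Sum.inr (Sum.inl l)) ω
        - F (Sum.inl l) ω * F (Sum.inr (Sum.inl k)) ω) ℙ := (EZW k l).1.sub (EZW l k).1
    rw [hexp, integral_add P (hL (k, l)).1, integral_sub (EZW k l).1 (EZW l k).1,
      (EZW k l).2, (EZW l k).2, (hL (k, l)).2.2.1]
    ring
  · -- (ii)
    intro k l hkl
    have hsq : (fun ω => B k l ω ^ 2) = fun ω => B k l ω * B k l ω := by
      funext ω; ring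
    have h1 : k ≠ l := ne_of_lt hkl
    rw [hsq, master k l k l, ELLsq (k, l), if_pos (rfl : k = k), if_pos (rfl : k = k),
      if_pos (rfl : l = l), if_pos (rfl : l = l), if_neg h1, if_neg h1,
      if_neg h1.symm, if_neg h1.symm]
    ring
  · -- (iii)
    intro k l k' l' hkl hk'l' hne
    rw [master k l k' l', ELL0 (k, l) (k', l') hne]
    have e1 : (if k = k' then (h : ℝ) / 12 else 0) * (if l = l' then (h : ℝ) else 0) = 0 := by
      rcases eq_or_ne k k' with h1 | h1
      · rcases eq_or_ne l l' with h2 | h2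
        · exact absurd (by rw [h1, h2]) hne
        · simp [h2]
      · simp [h1]
    have e4 : (if l = l' then (h : ℝ) / 12 else 0) * (if k = k' then (h : ℝ) else 0) = 0 := by
      rcases eq_or_ne k k' with h1 | h1
      · rcases eq_or_ne l l' with h2 | h2
        · exact absurd (by rw [h1, h2]) hne
        · simp [h2]
      · simp [h1]
    have hcontr : ¬(k = l' ∧ l = k') := by
      rintro ⟨h1, h2⟩
      rw [h1, h2] at hkl
      exact lt_asymm hk'l' hkl
    have e2 : (if k = l' then (h : ℝ) / 12 else 0) * (if l = k' then (h : ℝ) else 0) = 0 := by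
      rcases eq_or_ne k l' with h1 | h1
      · rcases eq_or_ne l k' with h2 | h2
        · exact absurd ⟨h1, h2⟩ hcontr
        · simp [h2]
      · simp [h1]
    have e3 : (if l = k' then (h : ℝ) / 12 else 0) * (if k = l' then (h : ℝ) else 0) = 0 := by
      rcases eq_or_ne k l' with h1 | h1
      · rcases eq_or_ne l k' with h2 | h2
        · exact absurd ⟨h1, h2⟩ hcontr
        · simp [h2]
      · simp [h1]
    rw [e1, e2, e3, e4]
    ring
  · -- (iv)
    intro k l m _
    have hexp : (fun ω => B k l ω * F (Sum.inr (Sum.inl m)) ω) = fun ω =>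
        F (Sum.inl k) ω * (F (Sum.inr (Sum.inl l)) ω * F (Sum.inr (Sum.inl m)) ω)
          - F (Sum.inl l) ω * (F (Sum.inr (Sum.inl k)) ω * F (Sum.inr (Sum.inl m)) ω)
          + F (Sum.inr (Sum.inl m)) ω * F (Sum.inr (Sum.inr (k, l))) ω := by
      funext ω; simp only [hB]; ring
    have P : Integrable (fun ω =>
        F (Sum.inl k) ω * (F (Sum.inr (Sum.inl l)) ω * F (Sum.inr (Sum.inl m)) ω)
          - F (Sum.inl l) ω * (F (Sum.inr (Sum.inl k)) ω * F (Sum.inr (Sum.inl m)) ω)) ℙ :=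
      (EZWW k l m).1.sub (EZWW l k m).1
    rw [hexp, integral_add P (EWL m (k, l)).1, integral_sub (EZWW k l m).1 (EZWW l k m).1,
      (EZWW k l m).2, (EZWW l k m).2, (EWL m (k, l)).2]
    ring
end

section
/- Let L be a Lie algebra over a commutative ring R and let S ⊆ L. Then the underlying R-submodule of the Lie subalgebra of L generated by S equals the R-submodule spanned by the set of all right-nested brackets ⁅s₁, ⁅s₂, …, ⁅s_{k−1}, s_k⁆ … ⁆⁆ with k ≥ 1 and s₁, …, s_k ∈ S (the case k = 1 being the elements of S themselves). In particular, every iterated Lie bracket of elements x₁, …, xₙ ∈ L is an R-linear combination of right-nested commutators of those elements. (This is Lemma A.3 of the paper, proved by induction on bracket length using the Jacobi identity.) -/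
/-- The right-nested Lie bracket `⁅s₁, ⁅s₂, …, ⁅s_{k−1}, s_k⁆ … ⁆⁆` of a list of
elements of a Lie ring; the empty list is sent to `0` and a singleton to its element. -/
def nestedBracket {L : Type*} [LieRing L] : List L → L
  | [] => 0
  | [x] => x
  | x :: y :: xs => ⁅x, nestedBracket (y :: xs)⁆

lemma nestedBracket_cons {L : Type*} [LieRing L] (x : L) (m : List L) (hm : m ≠ []) :
    nestedBracket (x :: m) = ⁅x, nestedBracket m⁆ := by
  cases m with
  | nil => exact absurd rfl hm
  | cons y ys => rfl

/-- For a Lie algebra `L` over a commutative ring `R` and a subset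
`S ⊆ L`, the underlying `R`-submodule of the Lie subalgebra generated by `S` equals the
`R`-submodule spanned by all right-nested brackets `⁅s₁, ⁅s₂, …, ⁅s_{k−1}, s_k⁆…⁆⁆`
with `k ≥ 1` and `s₁, …, s_k ∈ S`. -/
theorem lieSpan_eq_span_nestedBrackets
    (R : Type*) (L : Type*) [CommRing R] [LieRing L] [LieAlgebra R L] (S : Set L) :
    (LieSubalgebra.lieSpan R L S).toSubmodule =
      Submodule.span R
        {x : L | ∃ l : List L, l ≠ [] ∧ (∀ y ∈ l, y ∈ S) ∧ x = nestedBracket l} := by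
  set G : Set L := {x : L | ∃ l : List L, l ≠ [] ∧ (∀ y ∈ l, y ∈ S) ∧ x = nestedBracket l}
    with hG
  have memG : ∀ l : List L, l ≠ [] → (∀ y ∈ l, y ∈ S) →
      nestedBracket l ∈ Submodule.span R G := by
    intro l hl hlS
    exact Submodule.subset_span ⟨l, hl, hlS, rfl⟩
  -- bracketing a single element of S with an element of the span stays in the span
  have lieS : ∀ x ∈ S, ∀ z ∈ Submodule.span R G, ⁅x, z⁆ ∈ Submodule.span R G := by
    intro x hx z hz
    induction hz using Submodule.span_induction with
    | mem w hw =>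
      obtain ⟨m, hm, hmS, rfl⟩ := hw
      rw [← nestedBracket_cons x m hm]
      exact memG (x :: m) (by simp) (by
        intro y hy
        rcases List.mem_cons.mp hy with h | h
        · exact h ▸ hx
        · exact hmS y h)
    | zero => simp
    | add a b _ _ ha hb => rw [lie_add]; exact Submodule.add_mem _ ha hb
    | smul r a _ ha => rw [lie_smul]; exact Submodule.smul_mem _ r ha
  -- key: bracket of two generators lies in the span
  have key : ∀ l : List L, l ≠ [] → (∀ y ∈ l, y ∈ S) →
      ∀ m : List L, m ≠ [] → (∀ y ∈ m, y ∈ S) →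
      ⁅nestedBracket l, nestedBracket m⁆ ∈ Submodule.span R G := by
    intro l
    induction l with
    | nil => intro h; exact absurd rfl h
    | cons x xs ih =>
      intro _ hlS m hm hmS
      have hxS : x ∈ S := hlS x List.mem_cons_self
      cases xs with
      | nil =>
        show ⁅x, nestedBracket m⁆ ∈ _
        exact lieS x hxS _ (memG m hm hmS)
      | cons y ys =>
        have hxsS : ∀ z ∈ y :: ys, z ∈ S := fun z hz => hlS z (List.mem_cons_of_mem x hz)
        have h1 : ⁅nestedBracket (y :: ys), nestedBracket m⁆ ∈ Submodule.span R G :=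
          ih (by simp) hxsS m hm hmS
        have h2 : ⁅nestedBracket (y :: ys), nestedBracket (x :: m)⁆ ∈ Submodule.span R G :=
          ih (by simp) hxsS (x :: m) (by simp) (by
            intro z hz
            rcases List.mem_cons.mp hz with h | h
            · exact h ▸ hxS
            · exact hmS z h)
        have : nestedBracket (x :: y :: ys) = ⁅x, nestedBracket (y :: ys)⁆ := rfl
        rw [this, lie_lie, nestedBracket_cons x m hm] at *
        exact Submodule.sub_mem _ (lieS x hxS _ h1) h2
  -- the span is closed under the bracket
  have closed : ∀ a ∈ Submodule.span R G, ∀ b ∈ Submodule.span R G,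
      ⁅a, b⁆ ∈ Submodule.span R G := by
    intro a ha
    induction ha using Submodule.span_induction with
    | mem w hw =>
      obtain ⟨l, hl, hlS, rfl⟩ := hw
      intro b hb
      induction hb using Submodule.span_induction with
      | mem v hv =>
        obtain ⟨m, hm, hmS, rfl⟩ := hv
        exact key l hl hlS m hm hmS
      | zero => simp
      | add c d _ _ hc hd => rw [lie_add]; exact Submodule.add_mem _ hc hd
      | smul r c _ hc => rw [lie_smul]; exact Submodule.smul_mem _ r hc
    | zero => intro b _; simp
    | add c d _ _ hc hd =>
      intro b hb; rw [add_lie]; exact Submodule.add_mem _ (hc b hb) (hd b hb)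
    | smul r c _ hc =>
      intro b hb; rw [smul_lie]; exact Submodule.smul_mem _ r (hc b hb)
  let K : LieSubalgebra R L :=
    { Submodule.span R G with
      lie_mem' := fun {a b} ha hb => closed a ha b hb }
  apply le_antisymm
  · have hle : LieSubalgebra.lieSpan R L S ≤ K := by
      apply LieSubalgebra.lieSpan_le.mpr
      intro s hs
      exact memG [s] (by simp) (by simpa using hs)
    exact fun x hx => hle hx
  · rw [Submodule.span_le]
    rintro x ⟨l, hl, hlS, rfl⟩
    clear hl
    induction l with
    | nil => simp [nestedBracket]
    | cons y ys ih =>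
      have hy : y ∈ LieSubalgebra.lieSpan R L S :=
        LieSubalgebra.subset_lieSpan (hlS y List.mem_cons_self)
      cases ys with
      | nil => exact hy
      | cons z zs =>
        have := ih (fun w hw => hlS w (List.mem_cons_of_mem y hw))
        exact (LieSubalgebra.lieSpan R L S).lie_mem hy this
end
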